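/- Let (W,S) be a Coxeter system with finite index set B. For every n : ℕ and every w ∈ W, the identity is at least as likely as w for the lazy simple random walk: N n w ≤ N n 1. -/

import Mathlib

namespace LazyWalkAux

noncomputable section
open scoped Classical
open CoxeterSystem Finset

section Geometric
variable {B : Type*} [Fintype B] (M : CoxeterMatrix B)


/-- Entries of the geometric bilinear form. -/
def Cm (k l : B) : ℝ := - Real.cos (Real.pi / (M k l))

lemma Cm_diag (k : B) : Cm M k k = 1 := by
  unfold Cm
  rw [M.diagonal]
  norm_num

lemma Cm_symm (k l : B) : Cm M k l = Cm M l k := by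
  unfold Cm
  rw [M.symmetric]

/-- Simple root. -/
def av (k : B) : B → ℝ := fun b => if b = k then 1 else 0

/-- `bf M k x` is the value `B(αₖ, x)` of the geometric bilinear form. -/
def bf (k : B) (x : B → ℝ) : ℝ := ∑ l, Cm M k l * x l

lemma bf_av (k l : B) : bf M k (av l) = Cm M k l := by
  unfold bf av
  rw [Finset.sum_eq_single l]
  · simp
  · intro b _ hb
    simp [hb]
  · intro h
    exact absurd (Finset.mem_univ l) h

lemma bf_sub_smul (k' k : B) (x : B → ℝ) (t : ℝ) :
    bf M k' (fun b => x b - t * av k b) = bf M k' x - t * Cm M k' k := by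
  unfold bf
  have h : ∀ l, Cm M k' l * (x l - t * av k l)
      = Cm M k' l * x l - t * (Cm M k' l * av k l) := fun l => by ring
  simp only [h]
  rw [Finset.sum_sub_distrib, ← Finset.mul_sum]
  have : ∑ l, Cm M k' l * av k l = Cm M k' k := bf_av M k' k
  rw [this]

/-- The geometric reflection attached to a generator. -/
def grefl (k : B) (x : B → ℝ) : B → ℝ := fun b => x b - 2 * bf M k x * av k b

lemma grefl_apply (k : B) (x : B → ℝ) (b : B) :
    grefl M k x b = x b - 2 * bf M k x * av k b := rfl

lemma bf_grefl (k' k : B) (x : B → ℝ) :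
    bf M k' (grefl M k x) = bf M k' x - 2 * bf M k x * Cm M k' k := by
  have : grefl M k x = fun b => x b - (2 * bf M k x) * av k b := rfl
  rw [this, bf_sub_smul]

lemma grefl_invol (k : B) : Function.Involutive (grefl M k) := by
  intro x
  funext b
  have hb : bf M k (grefl M k x) = - bf M k x := by
    rw [bf_grefl, Cm_diag]; ring
  rw [grefl_apply, hb, grefl_apply]
  ring

/-- The geometric reflection as a permutation of `B → ℝ`. -/
def geomPerm (k : B) : Equiv.Perm (B → ℝ) := (grefl_invol M k).toPerm

lemma geomPerm_apply (k : B) (x : B → ℝ) : geomPerm M k x = grefl M k x := rfl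

/-- Chebyshev-type sequence. -/
def useq (K : ℝ) : ℕ → ℝ
  | 0 => 0
  | 1 => 1
  | (r+2) => K * useq K (r+1) - useq K r

lemma useq_closed (K : ℝ) (f : ℕ → ℝ) (hf : ∀ r, f (r+2) = K * f (r+1) - f r) :
    ∀ r, f (r+1) = useq K (r+1) * f 1 - useq K r * f 0 := by
  intro r
  induction r using Nat.twoStepInduction with
  | zero => simp [useq]
  | one =>
    rw [hf 0]
    simp [useq]
  | more r ih1 ih2 =>
    rw [hf (r+1), ih1, ih2, show r+1+1 = r+2 from rfl, show r+2+1 = r+3 from rfl]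
    have h1 : useq K (r+3) = K * useq K (r+2) - useq K (r+1) := rfl
    have h2 : useq K (r+2) = K * useq K (r+1) - useq K r := rfl
    rw [h1, h2]
    ring

lemma useq_sin (θ : ℝ) : ∀ r : ℕ, Real.sin (2*θ) * useq (2 * Real.cos (2*θ)) r
    = Real.sin (2*r*θ) := by
  intro r
  induction r using Nat.twoStepInduction with
  | zero => simp [useq]
  | one =>
    simp [useq]
  | more r ih1 ih2 =>
    have h1 : useq (2 * Real.cos (2*θ)) (r+2)
        = (2 * Real.cos (2*θ)) * useq (2 * Real.cos (2*θ)) (r+1)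
          - useq (2 * Real.cos (2*θ)) r := rfl
    push_cast at ih1 ih2 ⊢
    have hs : Real.sin (2*((r:ℝ)+2)*θ)
        = 2*Real.cos (2*θ) * Real.sin (2*((r:ℝ)+1)*θ) - Real.sin (2*(r:ℝ)*θ) := by
      rw [show 2*((r:ℝ)+2)*θ = 2*((r:ℝ)+1)*θ + 2*θ by ring, Real.sin_add,
        show 2*(r:ℝ)*θ = 2*((r:ℝ)+1)*θ - 2*θ by ring, Real.sin_sub]
      ring
    rw [h1, hs]
    linear_combination (2*Real.cos (2*θ)) * ih2 - ih1
section Braid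

variable {M}

private lemma geom_pair_pow (k l : B) (m : ℕ) (hm : M k l = m) (hm2 : 2 ≤ m) :
    ((geomPerm M k * geomPerm M l) ^ m) = 1 := by
  apply Equiv.ext
  intro x
  set c : ℝ := Cm M k l with hcdef
  have hc : c = - Real.cos (Real.pi / (m : ℝ)) := by rw [hcdef, Cm, hm]
  have hmr : (2:ℝ) ≤ (m:ℝ) := by exact_mod_cast hm2
  have hθpos : 0 < Real.pi / (m : ℝ) := by
    apply div_pos Real.pi_pos
    linarith
  have hθle : Real.pi / (m : ℝ) ≤ Real.pi / 2 :=
    div_le_div_of_nonneg_left Real.pi_pos.le two_pos hmr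
  have hcos_nonneg : 0 ≤ Real.cos (Real.pi / (m : ℝ)) := by
    apply Real.cos_nonneg_of_mem_Icc
    constructor
    · linarith [Real.pi_pos]
    · linarith
  have hcos_lt : Real.cos (Real.pi / (m : ℝ)) < 1 := by
    refine lt_of_le_of_ne (Real.cos_le_one _) ?_
    intro h
    have := (Real.cos_eq_one_iff_of_lt_of_lt
      (x := Real.pi / (m : ℝ)) (by linarith [Real.pi_pos]) (by linarith [Real.pi_pos])).mp h
    linarith
  have hc2 : c^2 < 1 := by
    rw [hc]
    nlinarith
  have hdd : (0:ℝ) < 1 - c^2 := by linarith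
  have hddne : (1 - c^2) ≠ 0 := ne_of_gt hdd
  set Bk : ℝ := bf M k x with hBk
  set Bl : ℝ := bf M l x with hBl
  set a : ℝ := (Bk - c*Bl)/(1 - c^2) with ha
  set b : ℝ := (Bl - c*Bk)/(1 - c^2) with hb
  set wv : B → ℝ := fun q => x q - a * av k q - b * av l q with hwv
  set combo : ℝ → ℝ → (B → ℝ) := fun p q => fun t => p * av k t + q * av l t + wv t
    with hcombo
  have hx : combo a b = x := by
    funext q
    simp only [hcombo, hwv]
    ring
  have hclk : Cm M l k = c := by rw [hcdef, Cm_symm]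
  have hbk_w : bf M k wv = 0 := by
    have h1 : wv = fun q => (fun q' => x q' - a * av k q') q - b * av l q := rfl
    rw [h1, bf_sub_smul]
    have h2 : bf M k (fun q' => x q' - a * av k q') = bf M k x - a * Cm M k k :=
      bf_sub_smul M k k x a
    rw [h2, Cm_diag, ← hcdef, ← hBk]
    rw [ha, hb]
    field_simp
    ring
  have hbl_w : bf M l wv = 0 := by
    have h1 : wv = fun q => (fun q' => x q' - a * av k q') q - b * av l q := rfl
    rw [h1, bf_sub_smul]
    have h2 : bf M l (fun q' => x q' - a * av k q') = bf M l x - a * Cm M l k :=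
      bf_sub_smul M l k x a
    rw [h2, Cm_diag, hclk, ← hBl]
    rw [ha, hb]
    field_simp
    ring
  -- bilinear form on combinations
  have hbf_combo : ∀ (k' : B), bf M k' wv = 0 → ∀ p q : ℝ,
      bf M k' (combo p q) = p * Cm M k' k + q * Cm M k' l := by
    intro k' hw p q
    have h1 : combo p q = fun t => (fun t' => wv t' - (-p) * av k t') t - (-q) * av l t := by
      funext t
      simp only [hcombo]
      ring
    rw [h1, bf_sub_smul]
    have h2 : bf M k' (fun t' => wv t' - (-p) * av k t') = bf M k' wv - (-p) * Cm M k' k :=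
      bf_sub_smul M k' k wv (-p)
    rw [h2, hw]
    ring
  have hbf_combo_k : ∀ p q : ℝ, bf M k (combo p q) = p + q * c := by
    intro p q
    rw [hbf_combo k hbk_w, Cm_diag, ← hcdef]
    ring
  have hbf_combo_l : ∀ p q : ℝ, bf M l (combo p q) = p * c + q := by
    intro p q
    rw [hbf_combo l hbl_w, Cm_diag, hclk]
    ring
  -- reflections on combinations
  have hrefl_l : ∀ p q : ℝ, grefl M l (combo p q) = combo p (-(2*c)*p - q) := by
    intro p q
    funext t
    rw [grefl_apply, hbf_combo_l]
    simp only [hcombo]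
    ring
  have hrefl_k : ∀ p q : ℝ, grefl M k (combo p q) = combo (-p - 2*c*q) q := by
    intro p q
    funext t
    rw [grefl_apply, hbf_combo_k]
    simp only [hcombo]
    ring
  set T : ℝ × ℝ → ℝ × ℝ := fun v => ((4*c^2-1)*v.1 + 2*c*v.2, -(2*c)*v.1 - v.2) with hT
  have hP : ∀ p q : ℝ, (geomPerm M k * geomPerm M l) (combo p q)
      = combo (T (p, q)).1 (T (p, q)).2 := by
    intro p q
    rw [Equiv.Perm.mul_apply, geomPerm_apply, geomPerm_apply, hrefl_l, hrefl_k]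
    have e1 : -p - 2*c*(-(2*c)*p - q) = (T (p,q)).1 := by rw [hT]; dsimp only; ring
    have e2 : -(2*c)*p - q = (T (p,q)).2 := by rw [hT]
    rw [e1, e2]
  set Tv : ℕ → ℝ × ℝ := fun r => T^[r] (a, b) with hTv
  have hTv0 : Tv 0 = (a, b) := rfl
  have hTvs : ∀ r, Tv (r+1) = T (Tv r) := by
    intro r
    rw [hTv]
    exact Function.iterate_succ_apply' T r (a, b)
  have hPpow : ∀ r : ℕ, ((geomPerm M k * geomPerm M l)^r) x = combo (Tv r).1 (Tv r).2 := by
    intro r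
    induction r with
    | zero => rw [pow_zero, hTv0]; exact (congrArg _ hx.symm)
    | succ r ih =>
      rw [pow_succ', Equiv.Perm.mul_apply, ih, hP, hTvs]
  -- the Chebyshev recurrence
  have hrec : ∀ (r : ℕ), Tv (r+2) = ((4*c^2-2) * (Tv (r+1)).1 - (Tv r).1,
      (4*c^2-2) * (Tv (r+1)).2 - (Tv r).2) := by
    intro r
    have h1 : Tv (r + 2) = T (T (Tv r)) := by
      have h' := hTvs (r+1)
      rw [hTvs r] at h'
      exact h'
    have h2 : Tv (r + 1) = T (Tv r) := hTvs r
    rw [h1, h2, hT]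
    dsimp only
    simp only [Prod.mk.injEq]
    constructor <;> ring
  have h1c : ∀ r, (Tv (r+1)).1
      = useq (4*c^2-2) (r+1) * (Tv 1).1 - useq (4*c^2-2) r * (Tv 0).1 :=
    useq_closed (4*c^2-2) (fun r => (Tv r).1) (fun r => congrArg Prod.fst (hrec r))
  have h2c : ∀ r, (Tv (r+1)).2
      = useq (4*c^2-2) (r+1) * (Tv 1).2 - useq (4*c^2-2) r * (Tv 0).2 :=
    useq_closed (4*c^2-2) (fun r => (Tv r).2) (fun r => congrArg Prod.snd (hrec r))
  have hK : (4*c^2-2) = 2 * Real.cos (2*(Real.pi / (m:ℝ))) := by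
    rw [Real.cos_two_mul, hc]
    ring
  have hgoal : Tv m = (a, b) →
      ((geomPerm M k * geomPerm M l) ^ m) x = (1 : Equiv.Perm (B → ℝ)) x := by
    intro h
    rw [hPpow m, h]
    simpa using hx
  apply hgoal
  by_cases hm2' : m = 2
  · subst hm2'
    have hc0 : c = 0 := by
      rw [hc]
      norm_num [Real.cos_pi_div_two]
    have e : Tv 2 = T (T (a, b)) := by
      have h' := hTvs 1
      rw [hTvs 0, hTv0] at h'
      exact h'
    rw [e, hT, hc0]
    dsimp only
    simp only [Prod.mk.injEq]
    constructor <;> ring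
  · have hm3 : 3 ≤ m := by omega
    have hm3r : (3:ℝ) ≤ (m:ℝ) := by exact_mod_cast hm3
    have hmne : (m:ℝ) ≠ 0 := by positivity
    have hsin : 0 < Real.sin (2*(Real.pi/(m:ℝ))) := by
      apply Real.sin_pos_of_pos_of_lt_pi
      · positivity
      · have e : 2 * (Real.pi/(m:ℝ)) = 2*Real.pi/(m:ℝ) := by ring
        rw [e, div_lt_iff₀ (by linarith : (0:ℝ) < (m:ℝ))]
        nlinarith [Real.pi_pos]
    have hum : useq (4*c^2-2) m = 0 := by
      have h' := useq_sin (Real.pi/(m:ℝ)) m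
      rw [← hK] at h'
      have harg : 2*(m:ℝ)*(Real.pi/(m:ℝ)) = 2*Real.pi := by
        field_simp
      rw [harg, Real.sin_two_pi] at h'
      exact (mul_eq_zero.mp h').resolve_left (ne_of_gt hsin)
    have hum1 : useq (4*c^2-2) (m-1) = -1 := by
      have h' := useq_sin (Real.pi/(m:ℝ)) (m-1)
      rw [← hK] at h'
      have hcast : ((m-1 : ℕ):ℝ) = (m:ℝ) - 1 := by
        rw [Nat.cast_sub (by omega)]
        norm_num
      rw [hcast] at h'
      have harg : 2*((m:ℝ)-1)*(Real.pi/(m:ℝ)) = 2*Real.pi - 2*(Real.pi/(m:ℝ)) := by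
        field_simp
      rw [harg, Real.sin_two_pi_sub] at h'
      have := mul_left_cancel₀ (ne_of_gt hsin)
        (h'.trans (by ring : -Real.sin (2*(Real.pi/(m:ℝ)))
          = Real.sin (2*(Real.pi/(m:ℝ))) * (-1)))
      exact this
    have hm1 : m - 1 + 1 = m := by omega
    have c1 : (Tv m).1 = a := by
      have h' := h1c (m-1)
      rw [hm1, hum, hum1, hTv0] at h'
      rw [h']
      ring
    have c2 : (Tv m).2 = b := by
      have h' := h2c (m-1)
      rw [hm1, hum, hum1, hTv0] at h'
      rw [h']
      ring
    have : Tv m = ((Tv m).1, (Tv m).2) := rfl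
    rw [this, c1, c2]

end Braid

lemma geom_liftable : M.IsLiftable (geomPerm M) := by
  intro k l
  by_cases hkl : k = l
  · subst hkl
    rw [M.diagonal, pow_one]
    apply Equiv.ext
    intro x
    rw [Equiv.Perm.mul_apply]
    have h := grefl_invol M k x
    simpa [geomPerm_apply] using h
  · rcases Nat.eq_zero_or_pos (M k l) with h0 | hpos
    · rw [h0, pow_zero]
    · have h2 : 2 ≤ M k l := by
        have := M.off_diagonal k l hkl
        omega
      exact geom_pair_pow k l (M k l) rfl h2

lemma simple_injective {W : Type*} [Group W] (cs : CoxeterSystem M W) :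
    Function.Injective cs.simple := by
  intro i j hij
  by_contra hne
  have h1 : geomPerm M i = geomPerm M j := by
    rw [← cs.lift_apply_simple (geom_liftable (M := M)) i,
      ← cs.lift_apply_simple (geom_liftable (M := M)) j, hij]
  have hL : geomPerm M i (av i) i = -1 := by
    rw [geomPerm_apply, grefl_apply, bf_av, Cm_diag]
    simp [av]
    norm_num
  have hR : geomPerm M j (av i) i = 1 := by
    rw [geomPerm_apply, grefl_apply, bf_av]
    simp [av, hne]
  rw [h1, hR] at hL
  norm_num at hL

end Geometric

variable {B W : Type*} [Group W] {M : CoxeterMatrix B} (cs : CoxeterSystem M W)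

lemma conj_eq_iff (a x e : W) : a * x * a⁻¹ = e ↔ x = a⁻¹ * e * a := by
  constructor
  · intro h; rw [← h]; group
  · intro h; rw [h]; group

/-- One step of the Tits `±1` cocycle representation. -/
def titsFun (i : B) : W × ZMod 2 → W × ZMod 2 :=
  fun x => (cs.simple i * x.1 * cs.simple i, x.2 + if x.1 = cs.simple i then 1 else 0)

lemma simple_conj_eq_iff (i : B) (x e : W) :
    cs.simple i * x * cs.simple i = e ↔ x = cs.simple i * e * cs.simple i := by
  nth_rw 2 [show cs.simple i = (cs.simple i)⁻¹ from (cs.inv_simple i).symm]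
  rw [conj_eq_iff]
  rw [cs.inv_simple]

lemma titsFun_involutive (i : B) : Function.Involutive (titsFun cs i) := by
  intro x
  unfold titsFun
  have h1 : cs.simple i * (cs.simple i * x.1 * cs.simple i) * cs.simple i = x.1 := by
    simp [mul_assoc, cs.simple_mul_simple_cancel_left, cs.simple_mul_simple_self]
  have hz : ∀ a : ZMod 2, a + 1 + 1 = a := by decide
  have h2 : (cs.simple i * x.1 * cs.simple i = cs.simple i) ↔ x.1 = cs.simple i := by
    rw [simple_conj_eq_iff]
    simp [mul_assoc, cs.simple_mul_simple_cancel_left, cs.simple_mul_simple_self]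
  ext
  · exact h1
  · simp only [h2]
    by_cases h : x.1 = cs.simple i <;> simp [h, hz]

/-- The Tits permutation attached to a single generator. -/
def titsPerm (i : B) : Equiv.Perm (W × ZMod 2) :=
  (titsFun_involutive cs i).toPerm

lemma titsPerm_apply (i : B) (x : W × ZMod 2) :
    titsPerm cs i x = (cs.simple i * x.1 * cs.simple i,
      x.2 + if x.1 = cs.simple i then 1 else 0) := rfl

section TwoGen

variable (i j : B)

/-- `d n = (s i * s j)⁻ⁿ * s j`; the sequence of "walls" crossed by the alternating word. -/
def dseq (n : ℕ) : W := ((cs.simple i * cs.simple j)⁻¹) ^ n * cs.simple j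

lemma simple_mul_g : cs.simple j * (cs.simple i * cs.simple j)
    = (cs.simple i * cs.simple j)⁻¹ * cs.simple j := by
  rw [mul_inv_rev, cs.inv_simple, cs.inv_simple]
  simp [mul_assoc, cs.simple_mul_simple_cancel_left, cs.simple_mul_simple_self]

lemma g_inv_dseq_g (n : ℕ) :
    ((cs.simple i * cs.simple j))⁻¹ * dseq cs i j n * (cs.simple i * cs.simple j)
      = dseq cs i j (n + 2) := by
  unfold dseq
  calc (cs.simple i * cs.simple j)⁻¹
        * ((cs.simple i * cs.simple j)⁻¹ ^ n * cs.simple j) * (cs.simple i * cs.simple j)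
      = (cs.simple i * cs.simple j)⁻¹ ^ (n+1)
          * (cs.simple j * (cs.simple i * cs.simple j)) := by group
    _ = (cs.simple i * cs.simple j)⁻¹ ^ (n+1)
          * ((cs.simple i * cs.simple j)⁻¹ * cs.simple j) := by rw [simple_mul_g]
    _ = (cs.simple i * cs.simple j)⁻¹ ^ (n + 2) * cs.simple j := by
          rw [← mul_assoc, ← pow_succ]

lemma g_pow_inv_dseq_g (n k : ℕ) :
    ((cs.simple i * cs.simple j)^k)⁻¹ * dseq cs i j n * (cs.simple i * cs.simple j)^k
      = dseq cs i j (n + 2*k) := by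
  induction k with
  | zero => simp
  | succ k ih =>
    have : ((cs.simple i * cs.simple j)^(k+1))⁻¹ * dseq cs i j n
        * (cs.simple i * cs.simple j)^(k+1)
        = (cs.simple i * cs.simple j)⁻¹
          * (((cs.simple i * cs.simple j)^k)⁻¹ * dseq cs i j n * (cs.simple i * cs.simple j)^k)
          * (cs.simple i * cs.simple j) := by
      rw [pow_succ]
      group
    rw [this, ih, g_inv_dseq_g, show n + 2*(k+1) = (n + 2*k) + 2 by ring]

lemma titsP_apply (x : W × ZMod 2) :
    (titsPerm cs i * titsPerm cs j) x
      = ((cs.simple i * cs.simple j) * x.1 * ((cs.simple i * cs.simple j))⁻¹,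
        x.2 + ((if x.1 = dseq cs i j 0 then 1 else 0)
             + (if x.1 = dseq cs i j 1 then 1 else 0))) := by
  rw [Equiv.Perm.mul_apply, titsPerm_apply, titsPerm_apply]
  dsimp only
  have e0 : dseq cs i j 0 = cs.simple j := by simp [dseq]
  have e1 : dseq cs i j 1 = cs.simple j * (cs.simple i * cs.simple j) := by
    rw [dseq, pow_one, mul_inv_rev, cs.inv_simple, cs.inv_simple]; group
  have hcond : (cs.simple j * x.1 * cs.simple j = cs.simple i) ↔ x.1 = dseq cs i j 1 := by
    rw [simple_conj_eq_iff, e1, mul_assoc]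
  simp only [Prod.mk.injEq]
  refine ⟨?_, ?_⟩
  · rw [mul_inv_rev, cs.inv_simple, cs.inv_simple]; group
  · simp only [hcond, e0]; ring

lemma titsP_pow_apply (k : ℕ) (x : W × ZMod 2) :
    ((titsPerm cs i * titsPerm cs j) ^ k) x
      = ((cs.simple i * cs.simple j)^k * x.1 * ((cs.simple i * cs.simple j)^k)⁻¹,
        x.2 + ∑ r ∈ Finset.range k,
          ((if x.1 = dseq cs i j (2*r) then 1 else 0)
           + (if x.1 = dseq cs i j (2*r+1) then 1 else 0))) := by
  induction k with
  | zero => simp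
  | succ k ih =>
    rw [pow_succ', Equiv.Perm.mul_apply, ih, titsP_apply]
    dsimp only
    have hcond : ∀ n : ℕ,
        ((cs.simple i * cs.simple j)^k * x.1 * ((cs.simple i * cs.simple j)^k)⁻¹
          = dseq cs i j n) ↔ (x.1 = dseq cs i j (n + 2*k)) := by
      intro n
      rw [conj_eq_iff, g_pow_inv_dseq_g]
    simp only [Prod.mk.injEq]
    refine ⟨?_, ?_⟩
    · rw [pow_succ', mul_inv_rev]
      simp [mul_assoc]
    · rw [Finset.sum_range_succ]
      simp only [hcond]
      rw [show (0:ℕ) + 2*k = 2*k by ring, show (1:ℕ) + 2*k = 2*k+1 by ring]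
      ring

lemma zmod2_sum_pairs (c : ℕ → ZMod 2) (m : ℕ) :
    ∑ r ∈ Finset.range m, (c (2*r) + c (2*r+1)) = ∑ n ∈ Finset.range (2*m), c n := by
  induction m with
  | zero => simp
  | succ m ih =>
    rw [Finset.sum_range_succ, ih, show 2*(m+1) = (2*m) + 1 + 1 by ring,
      Finset.sum_range_succ, Finset.sum_range_succ]
    ring

lemma tits_liftable : CoxeterMatrix.IsLiftable M (titsPerm cs) := by
  intro i j
  apply Equiv.ext
  intro x
  rw [titsP_pow_apply,
    zmod2_sum_pairs (fun n => if x.1 = dseq cs i j n then (1 : ZMod 2) else 0),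
    cs.simple_mul_simple_pow]
  have hper : ∀ n : ℕ, dseq cs i j (M i j + n) = dseq cs i j n := by
    intro n
    unfold dseq
    rw [pow_add, inv_pow, cs.simple_mul_simple_pow, inv_one, one_mul]
  rw [two_mul, Finset.sum_range_add]
  simp only [hper]
  have hz : ∀ a b : ZMod 2, a + (b + b) = a := by decide
  simp [hz]

/-- The Tits representation of the Coxeter group. -/
def theta : W →* Equiv.Perm (W × ZMod 2) := cs.lift ⟨titsPerm cs, tits_liftable cs⟩

lemma theta_simple (k : B) : theta cs (cs.simple k) = titsPerm cs k :=
  cs.lift_apply_simple (tits_liftable cs) k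

end TwoGen

section Eta

/-- The Tits reflection cocycle. -/
def eta (w t : W) : ZMod 2 := ((theta cs w) (t, 0)).2

lemma theta_apply (w : W) : ∀ (t : W) (ε : ZMod 2),
    theta cs w (t, ε) = (w * t * w⁻¹, ε + eta cs w t) := by
  refine cs.simple_induction_left
    (p := fun w => ∀ (t : W) (ε : ZMod 2),
      theta cs w (t, ε) = (w * t * w⁻¹, ε + eta cs w t)) w ?_ ?_
  · intro t ε
    simp [eta, map_one]
  · intro u k ih t ε
    have hmul : theta cs (cs.simple k * u) = titsPerm cs k * theta cs u := by
      rw [map_mul, theta_simple]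
    have heta : eta cs (cs.simple k * u) t
        = eta cs u t + (if u * t * u⁻¹ = cs.simple k then 1 else 0) := by
      unfold eta
      rw [hmul, Equiv.Perm.mul_apply, ih, titsPerm_apply]
      try dsimp only
      try rw [zero_add]
    rw [hmul, Equiv.Perm.mul_apply, ih, titsPerm_apply]
    dsimp only
    simp only [Prod.mk.injEq]
    refine ⟨?_, ?_⟩
    · rw [mul_inv_rev, cs.inv_simple]
      simp [mul_assoc]
    · rw [heta]; ring

lemma eta_one (t : W) : eta cs 1 t = 0 := by simp [eta, map_one]

lemma eta_simple_mul (k : B) (w t : W) :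
    eta cs (cs.simple k * w) t
      = eta cs w t + (if w * t * w⁻¹ = cs.simple k then 1 else 0) := by
  unfold eta
  rw [map_mul, Equiv.Perm.mul_apply, theta_simple, titsPerm_apply, theta_apply]
  try dsimp only
  try rw [zero_add]

lemma eta_mul_simple (w : W) (k : B) (t : W) :
    eta cs (w * cs.simple k) t
      = (if t = cs.simple k then 1 else 0)
        + eta cs w (cs.simple k * t * cs.simple k) := by
  unfold eta
  rw [map_mul, Equiv.Perm.mul_apply, theta_simple, titsPerm_apply]
  dsimp only
  rw [theta_apply]
  dsimp only
  rw [zero_add]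
  rfl

lemma eta_mem_rightInvSeq (ω : List B) (t : W) (h : eta cs (cs.wordProd ω) t = 1) :
    t ∈ cs.rightInvSeq ω := by
  induction ω with
  | nil =>
    rw [cs.wordProd_nil, eta_one] at h
    exact absurd h (by decide)
  | cons k ω ih =>
    have hris : cs.rightInvSeq (k :: ω)
        = ((cs.wordProd ω)⁻¹ * cs.simple k * cs.wordProd ω) :: cs.rightInvSeq ω := rfl
    rw [cs.wordProd_cons, eta_simple_mul] at h
    by_cases hc : cs.wordProd ω * t * (cs.wordProd ω)⁻¹ = cs.simple k
    · rw [hris]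
      rw [conj_eq_iff] at hc
      exact hc ▸ List.mem_cons_self
    · rw [if_neg hc, add_zero] at h
      rw [hris]
      exact List.mem_cons_of_mem _ (ih h)

lemma length_mul_lt_of_eta_eq_one (w t : W) (h : eta cs w t = 1) :
    cs.length (w * t) < cs.length w := by
  obtain ⟨ω, hred, rfl⟩ := cs.exists_reduced_word' w
  exact (cs.isRightInversion_of_mem_rightInvSeq hred (eta_mem_rightInvSeq cs ω t h)).2

/-- The parity of the number of times a walk from `1` to `u` crosses the wall of `s i`. -/
def phi (i : B) (u : W) : ZMod 2 := eta cs u⁻¹ (cs.simple i)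

lemma phi_one (i : B) : phi cs i 1 = 0 := by simp [phi, eta_one]

lemma phi_mul_simple (i : B) (u : W) (b : B) :
    phi cs i (u * cs.simple b)
      = phi cs i u + (if u⁻¹ * cs.simple i * u = cs.simple b then 1 else 0) := by
  unfold phi
  rw [mul_inv_rev, cs.inv_simple, eta_simple_mul, inv_inv]

lemma phi_descent (i : B) (w : W) (h : cs.length (cs.simple i * w) < cs.length w) :
    phi cs i w = 1 := by
  by_contra hne
  have h0 : phi cs i w = 0 := by
    revert hne; generalize phi cs i w = x; revert x; decide
  have hflip : phi cs i (cs.simple i * w) = 1 := by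
    unfold phi
    rw [mul_inv_rev, cs.inv_simple, eta_mul_simple, if_pos rfl]
    have : cs.simple i * cs.simple i * cs.simple i = cs.simple i := by
      rw [cs.simple_mul_simple_self, one_mul]
    rw [this]
    unfold phi at h0
    rw [h0, add_zero]
  have := length_mul_lt_of_eta_eq_one cs (cs.simple i * w)⁻¹ (cs.simple i) hflip
  have hsimpl : (cs.simple i * w)⁻¹ * cs.simple i = w⁻¹ := by
    rw [mul_inv_rev, cs.inv_simple, mul_assoc, cs.simple_mul_simple_self, mul_one]
  rw [hsimpl, cs.length_inv, cs.length_inv] at this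
  omega

end Eta

section WalkTop
variable [Fintype B]
section Walk

variable (i : B)

/-- Interpretation of a lazy step. -/
def stepw (o : Option B) : W := o.elim 1 cs.simple

/-- Product of a lazy walk. -/
def lp (l : List (Option B)) : W := (l.map (stepw cs)).prod

lemma lp_nil : lp cs ([] : List (Option B)) = 1 := rfl

lemma lp_cons (o : Option B) (l : List (Option B)) :
    lp cs (o :: l) = stepw cs o * lp cs l := by
  simp [lp]

/-- A crossing event: the wall of `s i` is adjacent, and the step either
crosses it or is lazy. -/
def EventAt (u : W) (o : Option B) : Prop :=
  ∃ b : B, u⁻¹ * cs.simple i * u = cs.simple b ∧ (o = none ∨ o = some b)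

/-- Toggle the step at an event. -/
def toggle (u : W) (o : Option B) : Option B :=
  match o with
  | some _ => none
  | none => if h : ∃ b : B, u⁻¹ * cs.simple i * u = cs.simple b then some h.choose else none

/-- Toggle the step at the first event of the walk. -/
def exch : W → List (Option B) → List (Option B)
  | _, [] => []
  | u, o :: l =>
    if EventAt cs i u o then toggle cs i u o :: l
    else o :: exch (u * stepw cs o) l

/-- The walk has at least one event. -/
def HasEvent : W → List (Option B) → Prop
  | _, [] => False
  | u, o :: l => EventAt cs i u o ∨ HasEvent (u * stepw cs o) l

lemma exch_cons_event {u : W} {o : Option B} (l : List (Option B))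
    (he : EventAt cs i u o) :
    exch cs i u (o :: l) = toggle cs i u o :: l := by
  rw [exch, if_pos he]

lemma exch_cons_not_event {u : W} {o : Option B} (l : List (Option B))
    (he : ¬ EventAt cs i u o) :
    exch cs i u (o :: l) = o :: exch cs i (u * stepw cs o) l := by
  rw [exch, if_neg he]

lemma exch_length : ∀ (l : List (Option B)) (u : W),
    (exch cs i u l).length = l.length := by
  intro l
  induction l with
  | nil => intro u; rfl
  | cons o l ih =>
    intro u
    by_cases he : EventAt cs i u o
    · rw [exch_cons_event cs i l he]
      simp
    · rw [exch_cons_not_event cs i l he]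
      simp [ih]

lemma lp_exch : ∀ (l : List (Option B)) (u : W), HasEvent cs i u l →
    lp cs (exch cs i u l) = u⁻¹ * cs.simple i * u * lp cs l := by
  intro l
  induction l with
  | nil => intro u h; exact absurd h (by simp [HasEvent])
  | cons o l ih =>
    intro u h
    by_cases he : EventAt cs i u o
    · rw [exch_cons_event cs i l he]
      obtain ⟨b, hb, hor⟩ := he
      rcases hor with rfl | rfl
      · -- lazy step toggled to a crossing step
        have hex : ∃ b : B, u⁻¹ * cs.simple i * u = cs.simple b := ⟨b, hb⟩
        rw [lp_cons, lp_cons]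
        unfold toggle
        rw [dif_pos hex]
        have hch : cs.simple hex.choose = u⁻¹ * cs.simple i * u := hex.choose_spec.symm
        show cs.simple hex.choose * lp cs l = u⁻¹ * cs.simple i * u * (1 * lp cs l)
        rw [hch, one_mul]
      · -- crossing step toggled to a lazy step
        rw [lp_cons, lp_cons]
        show (1:W) * lp cs l = u⁻¹ * cs.simple i * u * (cs.simple b * lp cs l)
        rw [hb, ← mul_assoc, cs.simple_mul_simple_self, one_mul]
    · rw [exch_cons_not_event cs i l he, lp_cons, lp_cons,
        ih (u * stepw cs o) (h.resolve_left he)]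
      group

lemma exch_exch : ∀ (l : List (Option B)) (u : W), HasEvent cs i u l →
    exch cs i u (exch cs i u l) = l := by
  intro l
  induction l with
  | nil => intro u h; exact absurd h (by simp [HasEvent])
  | cons o l ih =>
    intro u h
    by_cases he : EventAt cs i u o
    · rw [exch_cons_event cs i l he]
      obtain ⟨b, hb, hor⟩ := he
      have hex : ∃ b : B, u⁻¹ * cs.simple i * u = cs.simple b := ⟨b, hb⟩
      rcases hor with rfl | rfl
      · -- o = none
        have ht : toggle cs i u none = some hex.choose := by
          unfold toggle
          rw [dif_pos hex]
        rw [ht]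
        have he2 : EventAt cs i u (some hex.choose) :=
          ⟨hex.choose, hex.choose_spec, Or.inr rfl⟩
        rw [exch_cons_event cs i l he2]
        rfl
      · -- o = some b
        have ht : toggle cs i u (some b) = none := rfl
        rw [ht]
        have he2 : EventAt cs i u none := ⟨b, hb, Or.inl rfl⟩
        rw [exch_cons_event cs i l he2]
        have ht2 : toggle cs i u none = some hex.choose := by
          unfold toggle
          rw [dif_pos hex]
        rw [ht2]
        have : hex.choose = b := by
          apply simple_injective M cs
          rw [← hex.choose_spec, hb]
        rw [this]
    · rw [exch_cons_not_event cs i l he]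
      rw [exch_cons_not_event cs i (exch cs i (u * stepw cs o) l) he]
      rw [ih (u * stepw cs o) (h.resolve_left he)]

lemma hasEvent_of_phi_ne : ∀ (l : List (Option B)) (u : W),
    phi cs i u ≠ phi cs i (u * lp cs l) → HasEvent cs i u l := by
  intro l
  induction l with
  | nil =>
    intro u h
    rw [lp_nil, mul_one] at h
    exact absurd rfl h
  | cons o l ih =>
    intro u h
    rw [lp_cons, ← mul_assoc] at h
    by_cases hphi : phi cs i u = phi cs i (u * stepw cs o)
    · right
      apply ih
      rw [← hphi]
      exact h
    · left
      match o with
      | none =>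
        exfalso
        apply hphi
        simp [stepw]
      | some b =>
        have hb : stepw cs (some b) = cs.simple b := rfl
        rw [hb, phi_mul_simple] at hphi
        by_cases hc : u⁻¹ * cs.simple i * u = cs.simple b
        · exact ⟨b, hc, Or.inr rfl⟩
        · rw [if_neg hc, add_zero] at hphi
          exact absurd rfl hphi

end Walk

lemma lp_ofFn {n : ℕ} (f : Fin n → Option B) :
    lp cs (List.ofFn f) = (List.ofFn fun j => ((f j).elim 1 cs.simple)).prod := by
  rw [lp, List.map_ofFn]
  rfl

lemma ofFn_get_cast {α : Type*} {n : ℕ} (l : List α) (h : l.length = n) :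
    List.ofFn (fun j : Fin n => l.get (Fin.cast h.symm j)) = l := by
  subst h
  simpa using List.ofFn_get l

end WalkTop

end
end LazyWalkAux

/-- The number of lazy walks of length `n` (each step an element of `Option B`,
interpreted as `1` for `none` and the simple reflection `cs.simple i` for `some i`)
whose steps multiply, in order, to `w`. -/
noncomputable def lazyWalkCount {B W : Type*} [Group W] {M : CoxeterMatrix B}
    (cs : CoxeterSystem M W) (n : ℕ) (w : W) : ℕ :=
  Nat.card {f : Fin n → Option B //
    (List.ofFn fun j => ((f j).elim 1 cs.simple)).prod = w}

private lemma step_count {B W : Type*} [Fintype B] [Group W] {M : CoxeterMatrix B}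
    (cs : CoxeterSystem M W) (i : B) (n : ℕ) (w : W)
    (hw : cs.length (cs.simple i * w) < cs.length w) :
    lazyWalkCount cs n w ≤ lazyWalkCount cs n (cs.simple i * w) := by
  classical
  unfold lazyWalkCount
  have hlen : ∀ f : Fin n → Option B,
      (LazyWalkAux.exch cs i 1 (List.ofFn f)).length = n := by
    intro f
    rw [LazyWalkAux.exch_length, List.length_ofFn]
  have hev : ∀ f : Fin n → Option B,
      (List.ofFn fun j => ((f j).elim 1 cs.simple)).prod = w →
      LazyWalkAux.HasEvent cs i 1 (List.ofFn f) := by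
    intro f hf
    apply LazyWalkAux.hasEvent_of_phi_ne
    rw [one_mul, LazyWalkAux.lp_ofFn, hf, LazyWalkAux.phi_one,
      LazyWalkAux.phi_descent cs i w hw]
    decide
  set F : {f : Fin n → Option B // (List.ofFn fun j => ((f j).elim 1 cs.simple)).prod = w}
      → {f : Fin n → Option B //
          (List.ofFn fun j => ((f j).elim 1 cs.simple)).prod = cs.simple i * w} :=
    fun f => ⟨fun j => (LazyWalkAux.exch cs i 1 (List.ofFn f.1)).get
        (Fin.cast (hlen f.1).symm j),
      by
        rw [← LazyWalkAux.lp_ofFn, LazyWalkAux.ofFn_get_cast _ (hlen f.1),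
          LazyWalkAux.lp_exch cs i _ 1 (hev f.1 f.2), LazyWalkAux.lp_ofFn, f.2]
        group⟩ with hF
  apply Nat.card_le_card_of_injective F
  intro f g hfg
  have h1 : List.ofFn (F f).1 = LazyWalkAux.exch cs i 1 (List.ofFn f.1) := by
    rw [hF]
    exact LazyWalkAux.ofFn_get_cast _ (hlen f.1)
  have h2 : List.ofFn (F g).1 = LazyWalkAux.exch cs i 1 (List.ofFn g.1) := by
    rw [hF]
    exact LazyWalkAux.ofFn_get_cast _ (hlen g.1)
  have h3 : LazyWalkAux.exch cs i 1 (List.ofFn f.1)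
      = LazyWalkAux.exch cs i 1 (List.ofFn g.1) := by
    rw [← h1, ← h2, hfg]
  have h4 : List.ofFn f.1 = List.ofFn g.1 := by
    rw [← LazyWalkAux.exch_exch cs i (List.ofFn f.1) 1 (hev f.1 f.2), h3,
      LazyWalkAux.exch_exch cs i (List.ofFn g.1) 1 (hev g.1 g.2)]
  exact Subtype.ext (List.ofFn_injective h4)

/-- For the lazy simple random walk on a Coxeter group, the identity is the most
likely element after any number of steps. -/
theorem lazyWalkCount_le_one {B W : Type*} [Fintype B] [Group W]
    {M : CoxeterMatrix B} (cs : CoxeterSystem M W) (n : ℕ) (w : W) :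
    lazyWalkCount cs n w ≤ lazyWalkCount cs n 1 := by
  suffices H : ∀ (k : ℕ) (w : W), cs.length w ≤ k →
      lazyWalkCount cs n w ≤ lazyWalkCount cs n 1 by
    exact H (cs.length w) w le_rfl
  intro k
  induction k with
  | zero =>
    intro w hw
    rw [cs.length_eq_zero_iff.mp (Nat.le_zero.mp hw)]
  | succ k ih =>
    intro w hw
    by_cases h1 : w = 1
    · rw [h1]
    · obtain ⟨i, hi⟩ := cs.exists_leftDescent_of_ne_one h1
      have hlt : cs.length (cs.simple i * w) < cs.length w := hi
      calc lazyWalkCount cs n w ≤ lazyWalkCount cs n (cs.simple i * w) :=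
            step_count cs i n w hlt
        _ ≤ lazyWalkCount cs n 1 := ih _ (by omega)
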